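/- For all integers m, n ≥ 1, the determinant of the distance matrix D(K_{m,n}) equals 0 if and only if m = 2 and n = 2. -/

import Mathlib

open Finset Matrix

lemma sum_if_lt (m n : ℕ) (c₁ c₂ : ℝ) :
    ∑ i : Fin (m + n), (if (i : ℕ) < m then c₁ else c₂) = m * c₁ + n * c₂ := by
  rw [Fin.sum_univ_eq_sum_range (fun i => if i < m then c₁ else c₂) (m + n),
    Finset.sum_range_add]
  have h1 : ∑ i ∈ Finset.range m, (if i < m then c₁ else c₂) = m * c₁ := by
    rw [Finset.sum_congr rfl (fun i hi => by
      rw [if_pos (Finset.mem_range.mp hi)])]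
    simp [mul_comm]
  have h2 : ∑ i ∈ Finset.range n, (if m + i < m then c₁ else c₂) = n * c₂ := by
    rw [Finset.sum_congr rfl (fun i hi => by
      rw [if_neg (by omega)])]
    simp [mul_comm]
  rw [h1, h2]

/-- For all integers `m, n ≥ 1`, the determinant of the distance matrix of `K_{m,n}`
equals `0` if and only if `m = 2` and `n = 2`. Vertices are `Fin (m+n)`; the first part
consists of indices `< m`. -/
theorem det_distanceMatrix_Kmn_eq_zero_iff (m n : ℕ) (hm : 1 ≤ m) (hn : 1 ≤ n)
    (D : Matrix (Fin (m + n)) (Fin (m + n)) ℝ)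
    (hD : ∀ i j : Fin (m + n), D i j =
      if i = j then 0 else if (i.val < m ↔ j.val < m) then 2 else 1) :
    D.det = 0 ↔ (m = 2 ∧ n = 2) := by
  set A : Matrix (Fin (m + n)) (Fin 2) ℝ := fun i k =>
    if (i : ℕ) < m then (if k = 0 then 1 else 0) else (if k = 0 then 0 else 1) with hA
  set B : Matrix (Fin 2) (Fin (m + n)) ℝ := fun k j =>
    if (j : ℕ) < m then (if k = 0 then -1 else -(1/2)) else (if k = 0 then -(1/2) else -1)
    with hB
  have hDeq : D = (-2 : ℝ) • (1 + A * B) := by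
    ext i j
    rw [hD]
    simp only [Matrix.smul_apply, Matrix.add_apply, Matrix.one_apply, Matrix.mul_apply,
      Fin.sum_univ_two]
    simp only [hA, hB]
    by_cases hij : i = j <;> by_cases h1 : (i : ℕ) < m <;> by_cases h2 : (j : ℕ) < m <;>
      simp [hij, h1, h2]
  have hdet : D.det = (-2 : ℝ) ^ (m + n) * ((1 - m) * (1 - n) - m * n / 4) := by
    rw [hDeq, Matrix.det_smul, Matrix.det_one_add_mul_comm]
    have hcard : Fintype.card (Fin (m + n)) = m + n := by simp
    rw [hcard]
    congr 1
    have e00 : (B * A) 0 0 = -(m : ℝ) := by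
      rw [Matrix.mul_apply,
        Finset.sum_congr rfl (fun j _ => show B 0 j * A j 0 =
          if (j : ℕ) < m then (-1 : ℝ) else 0 from by
            by_cases h : (j : ℕ) < m <;> simp [hA, hB, h]),
        sum_if_lt]
      ring
    have e01 : (B * A) 0 1 = -(n : ℝ) / 2 := by
      rw [Matrix.mul_apply,
        Finset.sum_congr rfl (fun j _ => show B 0 j * A j 1 =
          if (j : ℕ) < m then (0 : ℝ) else -(1/2) from by
            by_cases h : (j : ℕ) < m <;> simp [hA, hB, h]),
        sum_if_lt]
      ring
    have e10 : (B * A) 1 0 = -(m : ℝ) / 2 := by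
      rw [Matrix.mul_apply,
        Finset.sum_congr rfl (fun j _ => show B 1 j * A j 0 =
          if (j : ℕ) < m then (-(1/2) : ℝ) else 0 from by
            by_cases h : (j : ℕ) < m <;> simp [hA, hB, h]),
        sum_if_lt]
      ring
    have e11 : (B * A) 1 1 = -(n : ℝ) := by
      rw [Matrix.mul_apply,
        Finset.sum_congr rfl (fun j _ => show B 1 j * A j 1 =
          if (j : ℕ) < m then (0 : ℝ) else -1 from by
            by_cases h : (j : ℕ) < m <;> simp [hA, hB, h]),
        sum_if_lt]
      ring
    rw [Matrix.det_fin_two]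
    simp only [Matrix.add_apply, Matrix.one_apply, e00, e01, e10, e11]
    norm_num
    ring
  rw [hdet]
  have hpow : ((-2 : ℝ) ^ (m + n)) ≠ 0 := pow_ne_zero _ (by norm_num)
  rw [mul_eq_zero, or_iff_right hpow]
  constructor
  · intro h
    have h4 : (4 : ℝ) * ((1 - m) * (1 - n)) = m * n := by
      field_simp at h; linarith
    have hz : (4 : ℤ) * ((1 - m) * (1 - n)) = m * n := by
      exact_mod_cast h4
    have key : ((3 : ℤ) * m - 4) * (3 * n - 4) = 4 := by linear_combination 3 * hz
    have hm' : (1 : ℤ) ≤ m := by exact_mod_cast hm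
    have hn' : (1 : ℤ) ≤ n := by exact_mod_cast hn
    have hm2 : (2 : ℤ) ≤ m ∧ (2 : ℤ) ≤ n := by
      constructor
      · by_contra hc
        push_neg at hc
        have : (m : ℤ) = 1 := by omega
        rw [this] at key
        omega
      · by_contra hc
        push_neg at hc
        have : (n : ℤ) = 1 := by omega
        rw [this] at key
        omega
    obtain ⟨hm2, hn2⟩ := hm2
    have ha : (3 : ℤ) * m - 4 ≤ 2 := by nlinarith
    have hb : (3 : ℤ) * n - 4 ≤ 2 := by nlinarith
    have : (m : ℤ) = 2 ∧ (n : ℤ) = 2 := by omega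
    exact ⟨by exact_mod_cast this.1, by exact_mod_cast this.2⟩
  · rintro ⟨rfl, rfl⟩
    norm_num
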